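/- arXiv:2110.15291 — 2 statements merged into one kernel-verified Lean document; each statement's English description precedes it below -/
import Mathlib

section
/- Let {T_n} be any family of trees with T_n having n vertices, and {X_{T_λ}} the corresponding tree basis of symmetric functions. For any (vertex-weighted) graph (G,ω) and any k, the sum of the coefficients of X_{(G,ω)} over tree-basis elements X_{T_λ} with ℓ(λ) = k equals the sum of the coefficients over path-basis elements X_{P_λ} with ℓ(λ) = k. That is, the tree polynomial is independent of the choice of tree basis. -/
open Polynomial

noncomputable section
open scoped Classical

/-- The weighted chromatic symmetric function of a (vertex-weighted) finite simple graph,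
as a formal power series in the variables `x_0, x_1, x_2, …`: the coefficient of a monomial
`d` is the number of proper colourings `κ : V → ℕ` such that for each colour `i`, the total
weight of vertices coloured `i` is `d i`. -/
def wcsf {V : Type} [Fintype V] (G : SimpleGraph V) (ω : V → ℕ) : MvPowerSeries ℕ ℚ :=
  fun d => (Nat.card {κ : V → ℕ // (∀ u v, G.Adj u v → κ u ≠ κ v) ∧
    ∀ i : ℕ, ∑ v ∈ Finset.univ.filter (fun v => κ v = i), ω v = d i} : ℚ)

/-- The (unweighted) chromatic symmetric function. -/
def csf {V : Type} [Fintype V] (G : SimpleGraph V) : MvPowerSeries ℕ ℚ :=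
  wcsf G (fun _ => 1)

/-- `XP μ` is the chromatic symmetric function of the disjoint union of paths whose sizes are
given by the multiset `μ` (the chromatic symmetric function is multiplicative over disjoint
unions). -/
def XP (μ : Multiset ℕ) : MvPowerSeries ℕ ℚ :=
  (μ.map (fun m => csf (SimpleGraph.pathGraph m))).prod

/-- The power-sum symmetric function `p_n = Σ_i x_i^n`. -/
def psum (n : ℕ) : MvPowerSeries ℕ ℚ :=
  fun d => if ∃ i, d = Finsupp.single i n then 1 else 0

/-- The power-sum symmetric function `p_μ`. -/
def pp (μ : Multiset ℕ) : MvPowerSeries ℕ ℚ := (μ.map psum).prod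

/-- `P` is the chromatic polynomial of `G`: `P(k)` counts proper `k`-colourings for all
positive integers `k`. -/
def IsChromaticPoly {V : Type} [Fintype V] (G : SimpleGraph V) (P : Polynomial ℚ) : Prop :=
  ∀ k : ℕ, 0 < k → P.eval (k : ℚ) =
    Nat.card {c : V → Fin k // ∀ u v, G.Adj u v → c u ≠ c v}

/-- The polynomial `Σ_λ a_λ x^{ℓ(λ)}` built from coefficients `a` indexed by partitions of
`n`; when `a` gives the path-basis coefficients of `X_G` this is the tree polynomial `τ_G`,
and when `a` gives the power-sum coefficients it is the chromatic polynomial. -/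
def basisPoly (n : ℕ) (a : n.Partition → ℚ) : Polynomial ℚ :=
  ∑ l : n.Partition, Polynomial.C (a l) * Polynomial.X ^ l.parts.card
-- Section 1: the linear functional Phi and homogeneity

/-- Sum of coefficients of monomials supported on the first `k` variables with total degree `n`. -/
def Phi (k n : ℕ) (f : MvPowerSeries ℕ ℚ) : ℚ :=
  ∑ d ∈ (Finset.range k).finsuppAntidiag n, f d

lemma Phi_sum {ι : Type*} (k n : ℕ) (s : Finset ι) (F : ι → MvPowerSeries ℕ ℚ) :
    Phi k n (∑ i ∈ s, F i) = ∑ i ∈ s, Phi k n (F i) := by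
  unfold Phi
  exact (Finset.sum_congr rfl fun d _ => map_sum (MvPowerSeries.coeff d) F s).trans Finset.sum_comm

lemma Phi_smul (k n : ℕ) (c : ℚ) (f : MvPowerSeries ℕ ℚ) :
    Phi k n (c • f) = c * Phi k n f := by
  unfold Phi
  exact (Finset.mul_sum ..).symm

/-- `f` is homogeneous of degree `n`. -/
def IsHomog (n : ℕ) (f : MvPowerSeries ℕ ℚ) : Prop :=
  ∀ d : ℕ →₀ ℕ, f d ≠ 0 → (d.sum fun _ m => m) = n

lemma isHomog_one : IsHomog 0 1 := by
  intro d hd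
  by_cases h : d = 0
  · subst h; simp
  · exfalso
    apply hd
    have : (1 : MvPowerSeries ℕ ℚ) d = if d = 0 then 1 else 0 := MvPowerSeries.coeff_one d
    rw [this, if_neg h]

lemma isHomog_mul {n1 n2 : ℕ} {f g : MvPowerSeries ℕ ℚ} (hf : IsHomog n1 f)
    (hg : IsHomog n2 g) : IsHomog (n1 + n2) (f * g) := by
  intro d hd
  have : (f * g) d = ∑ p ∈ Finset.HasAntidiagonal.antidiagonal d, f p.1 * g p.2 := MvPowerSeries.coeff_mul (n := d) (φ := f) (ψ := g)
  rw [this] at hd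
  obtain ⟨p, hp, hne⟩ := Finset.exists_ne_zero_of_sum_ne_zero hd
  rw [Finset.HasAntidiagonal.mem_antidiagonal] at hp
  have h1 : f p.1 ≠ 0 := fun h => hne (by rw [h, zero_mul])
  have h2 : g p.2 ≠ 0 := fun h => hne (by rw [h, mul_zero])
  have := hf _ h1
  have := hg _ h2
  subst hp
  rw [Finsupp.sum_add_index' (fun _ => rfl) (fun _ _ _ => rfl)]
  omega

lemma support_subset_left {p1 p2 : ℕ →₀ ℕ} : p1.support ⊆ (p1 + p2).support := by
  intro i hi
  rw [Finsupp.mem_support_iff] at hi ⊢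
  simp only [Finsupp.add_apply]
  omega

lemma support_subset_right {p1 p2 : ℕ →₀ ℕ} : p2.support ⊆ (p1 + p2).support := by
  intro i hi
  rw [Finsupp.mem_support_iff] at hi ⊢
  simp only [Finsupp.add_apply]
  omega

lemma sum_eq_degree {d : ℕ →₀ ℕ} {k : ℕ} (h : d.support ⊆ Finset.range k) :
    (∑ i ∈ Finset.range k, d i) = d.sum fun _ m => m := by
  rw [Finsupp.sum]
  exact (Finset.sum_subset h (fun x _ hx => Finsupp.notMem_support_iff.mp hx)).symm

lemma Phi_mul {k n1 n2 : ℕ} {f g : MvPowerSeries ℕ ℚ} (hf : IsHomog n1 f)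
    (hg : IsHomog n2 g) :
    Phi k (n1 + n2) (f * g) = Phi k n1 f * Phi k n2 g := by
  unfold Phi
  refine Eq.trans ?_ ((Finset.sum_mul_sum ..).trans (Finset.sum_product' ..).symm).symm
  have hcoe : ∀ d : ℕ →₀ ℕ, (f * g) d = ∑ p ∈ Finset.HasAntidiagonal.antidiagonal d, f p.1 * g p.2 :=
    fun d => MvPowerSeries.coeff_mul (n := d) (φ := f) (ψ := g)
  calc ∑ d ∈ (Finset.range k).finsuppAntidiag (n1 + n2), (f * g) d
      = ∑ d ∈ (Finset.range k).finsuppAntidiag (n1 + n2),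
          ∑ p ∈ Finset.HasAntidiagonal.antidiagonal d, f p.1 * g p.2 :=
        Finset.sum_congr rfl fun d _ => hcoe d
    _ = ∑ x ∈ ((Finset.range k).finsuppAntidiag (n1 + n2)).sigma
          (fun d => Finset.HasAntidiagonal.antidiagonal d), f x.2.1 * g x.2.2 := by
        rw [Finset.sum_sigma]
    _ = ∑ p ∈ ((Finset.range k).finsuppAntidiag n1) ×ˢ ((Finset.range k).finsuppAntidiag n2),
          f p.1 * g p.2 := by
        refine Finset.sum_bij_ne_zero (fun x _ _ => x.2) ?_ ?_ ?_ ?_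
        · rintro ⟨d, p1, p2⟩ h₁ h₂
          simp only [Finset.mem_sigma, Finset.mem_finsuppAntidiag,
            Finset.HasAntidiagonal.mem_antidiagonal] at h₁
          obtain ⟨⟨hsum, hsupp⟩, hp⟩ := h₁
          have hf1 : f p1 ≠ 0 := fun h => h₂ (by simp [h])
          have hg2 : g p2 ≠ 0 := fun h => h₂ (by simp [h])
          have hd1 := hf _ hf1
          have hd2 := hg _ hg2
          subst hp
          have hs1 : p1.support ⊆ Finset.range k := support_subset_left.trans hsupp
          have hs2 : p2.support ⊆ Finset.range k := support_subset_right.trans hsupp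
          simp only [Finset.mem_product, Finset.mem_finsuppAntidiag]
          exact ⟨⟨by rw [sum_eq_degree hs1, hd1], hs1⟩, ⟨by rw [sum_eq_degree hs2, hd2], hs2⟩⟩
        · rintro ⟨d₁, p₁⟩ hm₁ hne₁ ⟨d₂, p₂⟩ hm₂ hne₂ h
          simp only [Finset.mem_sigma, Finset.HasAntidiagonal.mem_antidiagonal] at hm₁ hm₂
          dsimp at h
          subst h
          simp only [Sigma.mk.inj_iff, heq_eq_eq, and_true]
          rw [← hm₁.2, ← hm₂.2]
        · rintro ⟨p1, p2⟩ hmem hne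
          simp only [Finset.mem_product, Finset.mem_finsuppAntidiag] at hmem
          obtain ⟨⟨hsum1, hsupp1⟩, hsum2, hsupp2⟩ := hmem
          refine ⟨⟨p1 + p2, p1, p2⟩, ?_, hne, rfl⟩
          simp only [Finset.mem_sigma, Finset.mem_finsuppAntidiag, Finset.HasAntidiagonal.mem_antidiagonal]
          refine ⟨⟨?_, ?_⟩, trivial⟩
          · rw [← hsum1, ← hsum2]
            rw [Finset.sum_congr rfl (fun i _ => (Finsupp.add_apply p1 p2 i)), Finset.sum_add_distrib]
          · exact (Finsupp.support_add).trans (Finset.union_subset hsupp1 hsupp2)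
        · intros; rfl

lemma isHomog_prod {μ : Multiset ℕ} {F : ℕ → MvPowerSeries ℕ ℚ}
    (hF : ∀ m ∈ μ, IsHomog m (F m)) : IsHomog μ.sum ((μ.map F).prod) := by
  induction μ using Multiset.induction_on with
  | empty => simpa using isHomog_one
  | cons m μ ih =>
      simp only [Multiset.map_cons, Multiset.prod_cons, Multiset.sum_cons]
      exact isHomog_mul (hF m (Multiset.mem_cons_self m μ))
        (ih fun x hx => hF x (Multiset.mem_cons_of_mem hx))

lemma Phi_one (k : ℕ) : Phi k 0 1 = 1 := by
  unfold Phi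
  have h0 : (Finset.range k).finsuppAntidiag (0:ℕ) = {0} := by
    ext d
    simp only [Finset.mem_finsuppAntidiag, Finset.mem_singleton]
    constructor
    · rintro ⟨hsum, hsupp⟩
      ext i
      by_cases hi : i ∈ d.support
      · have := Finset.sum_eq_zero_iff.mp hsum i (hsupp hi)
        simpa using this
      · simpa using Finsupp.notMem_support_iff.mp hi
    · rintro rfl
      simp
  rw [h0]
  exact (Finset.sum_singleton _ _).trans (MvPowerSeries.coeff_zero_one (R:=ℚ) (σ:=ℕ))

lemma Phi_prod {k : ℕ} {μ : Multiset ℕ} {F : ℕ → MvPowerSeries ℕ ℚ}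
    (hF : ∀ m ∈ μ, IsHomog m (F m)) :
    Phi k μ.sum ((μ.map F).prod) = (μ.map (fun m => Phi k m (F m))).prod := by
  induction μ using Multiset.induction_on with
  | empty => simpa using Phi_one k
  | cons m μ ih =>
      simp only [Multiset.map_cons, Multiset.prod_cons, Multiset.sum_cons]
      rw [Phi_mul (hF m (Multiset.mem_cons_self m μ))
        (isHomog_prod fun x hx => hF x (Multiset.mem_cons_of_mem hx))]
      rw [ih fun x hx => hF x (Multiset.mem_cons_of_mem hx)]
-- Section 2: Phi of wcsf counts proper colorings

/-- The weight profile of a colouring. -/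
def prof {V : Type} [Fintype V] (ω : V → ℕ) (κ : V → ℕ) : ℕ →₀ ℕ :=
  ∑ v, Finsupp.single (κ v) (ω v)

lemma prof_apply {V : Type} [Fintype V] (ω : V → ℕ) (κ : V → ℕ) (i : ℕ) :
    prof ω κ i = ∑ v ∈ Finset.univ.filter (fun v => κ v = i), ω v := by
  unfold prof
  rw [Finset.sum_apply']
  rw [Finset.sum_filter]
  exact Finset.sum_congr rfl fun v _ => Finsupp.single_apply

lemma prof_degree {V : Type} [Fintype V] (ω : V → ℕ) (κ : V → ℕ) :
    (prof ω κ).sum (fun _ m => m) = ∑ v, ω v := by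
  unfold prof
  rw [← Finsupp.sum_finset_sum_index (fun _ => rfl) (fun _ _ _ => rfl)]
  exact Finset.sum_congr rfl fun v _ => Finsupp.sum_single_index rfl

lemma prof_pos {V : Type} [Fintype V] {ω : V → ℕ} (hω : ∀ v, 0 < ω v) (κ : V → ℕ) (v : V) :
    0 < prof ω κ (κ v) := by
  rw [prof_apply]
  refine Finset.sum_pos' (fun w _ => Nat.zero_le _) ⟨v, ?_, hω v⟩
  simp

lemma prof_support_subset {V : Type} [Fintype V] {ω : V → ℕ} {κ : V → ℕ} {k : ℕ}
    (h : ∀ v, κ v < k) : (prof ω κ).support ⊆ Finset.range k := by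
  intro i hi
  rw [Finsupp.mem_support_iff] at hi
  rw [prof_apply] at hi
  obtain ⟨v, hv, -⟩ := Finset.exists_ne_zero_of_sum_ne_zero hi
  rw [Finset.mem_filter] at hv
  rw [Finset.mem_range, ← hv.2]
  exact h v

lemma wcsf_coeff {V : Type} [Fintype V] (G : SimpleGraph V) (ω : V → ℕ) (d : ℕ →₀ ℕ) :
    wcsf G ω d = (Nat.card {κ : V → ℕ // (∀ u v, G.Adj u v → κ u ≠ κ v) ∧
      prof ω κ = d} : ℚ) := by
  unfold wcsf
  congr 1
  refine Nat.card_congr (Equiv.subtypeEquivRight fun κ => ?_)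
  constructor
  · rintro ⟨h1, h2⟩
    exact ⟨h1, Finsupp.ext fun i => by rw [prof_apply]; exact h2 i⟩
  · rintro ⟨h1, h2⟩
    exact ⟨h1, fun i => by rw [← prof_apply ω κ i, h2]⟩

lemma isHomog_wcsf {V : Type} [Fintype V] (G : SimpleGraph V) (ω : V → ℕ) :
    IsHomog (∑ v, ω v) (wcsf G ω) := by
  intro d hd
  rw [wcsf_coeff] at hd
  have : Nat.card {κ : V → ℕ // (∀ u v, G.Adj u v → κ u ≠ κ v) ∧ prof ω κ = d} ≠ 0 := by
    simpa using hd
  have hne : Nonempty {κ : V → ℕ // (∀ u v, G.Adj u v → κ u ≠ κ v) ∧ prof ω κ = d} :=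
    Nat.card_ne_zero.mp this |>.1
  obtain ⟨⟨κ, -, hκ⟩⟩ := hne
  rw [← hκ]
  exact prof_degree ω κ

lemma Phi_wcsf {V : Type} [Fintype V] (G : SimpleGraph V) {ω : V → ℕ} (hω : ∀ v, 0 < ω v)
    (k : ℕ) :
    Phi k (∑ v, ω v) (wcsf G ω) =
      (Nat.card {c : V → Fin k // ∀ u v, G.Adj u v → c u ≠ c v} : ℚ) := by
  classical
  unfold Phi
  rw [Finset.sum_congr rfl fun d _ => wcsf_coeff G ω d, ← Nat.cast_sum]
  congr 1
  -- step A: identify each fiber with `Fin k`-valued colourings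
  have stepA : ∀ d ∈ (Finset.range k).finsuppAntidiag (∑ v, ω v),
      Nat.card {κ : V → ℕ // (∀ u v, G.Adj u v → κ u ≠ κ v) ∧ prof ω κ = d} =
      (Finset.univ.filter (fun c : V → Fin k =>
        (∀ u v, G.Adj u v → c u ≠ c v) ∧ prof ω (fun v => (c v : ℕ)) = d)).card := by
    intro d hd
    rw [Finset.mem_finsuppAntidiag] at hd
    rw [← Fintype.card_subtype, ← Nat.card_eq_fintype_card]
    refine Nat.card_congr ?_
    have hbound : ∀ (κ : V → ℕ), prof ω κ = d → ∀ v, κ v < k := by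
      intro κ hκ v
      have h1 : 0 < d (κ v) := hκ ▸ prof_pos hω κ v
      have h2 : κ v ∈ d.support := Finsupp.mem_support_iff.mpr h1.ne'
      simpa using hd.2 h2
    refine ⟨fun x => ⟨fun v => ⟨x.1 v, hbound x.1 x.2.2 v⟩,
        fun u v hadj heq => x.2.1 u v hadj (by simpa using heq), x.2.2⟩,
      fun y => ⟨fun v => (y.1 v : ℕ),
        fun u v hadj heq => y.2.1 u v hadj (Fin.val_injective heq), y.2.2⟩, ?_, ?_⟩
    · rintro ⟨κ, h⟩; rfl
    · rintro ⟨c, h⟩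
      apply Subtype.ext
      funext v
      rfl
  rw [Finset.sum_congr rfl stepA]
  -- step B: fiberwise counting
  have hfib := Finset.card_eq_sum_card_fiberwise (f := fun c : V → Fin k => prof ω (fun v => (c v : ℕ)))
    (s := Finset.univ.filter (fun c : V → Fin k => ∀ u v, G.Adj u v → c u ≠ c v))
    (t := (Finset.range k).finsuppAntidiag (∑ v, ω v)) ?_
  · rw [Nat.card_eq_fintype_card, Fintype.card_subtype, hfib]
    refine Finset.sum_congr rfl fun d hd => ?_
    rw [Finset.filter_filter]
  · intro c hc
    rw [Finset.mem_coe, Finset.mem_finsuppAntidiag]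
    have hsupp : (prof ω (fun v => (c v : ℕ))).support ⊆ Finset.range k :=
      prof_support_subset (fun v => (c v).isLt)
    constructor
    · rw [show ((Finset.range k).sum (prof ω (fun v => (c v : ℕ)))) =
        (∑ i ∈ Finset.range k, prof ω (fun v => (c v : ℕ)) i) from rfl,
        sum_eq_degree hsupp, prof_degree]
    · exact hsupp
-- Section 3: counting proper colourings of trees and paths

/-- number of proper `k`-colourings -/
def ncol {V : Type} (G : SimpleGraph V) (k : ℕ) : ℕ :=
  Nat.card {c : V → Fin k // ∀ u v, G.Adj u v → c u ≠ c v}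

lemma ncol_iso {V W : Type} {G : SimpleGraph V} {G' : SimpleGraph W}
    (φ : G ≃g G') (k : ℕ) : ncol G k = ncol G' k := by
  unfold ncol
  refine Nat.card_congr ⟨fun c => ⟨fun w => c.1 (φ.symm w), fun a b hab hne => c.2 _ _
      (φ.symm.map_rel_iff.mpr hab) hne⟩,
    fun c => ⟨fun v => c.1 (φ v), fun a b hab hne => c.2 _ _ (φ.map_rel_iff.mpr hab) hne⟩,
    ?_, ?_⟩
  · rintro ⟨c, hc⟩; apply Subtype.ext; funext v; simp
  · rintro ⟨c, hc⟩; apply Subtype.ext; funext w; simp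

lemma ncol_of_card_one {V : Type} [Fintype V] (G : SimpleGraph V)
    (h : Fintype.card V = 1) (k : ℕ) : ncol G k = k := by
  have hsub : Subsingleton V := by
    rw [← Fintype.card_le_one_iff_subsingleton, h]
  have hprop : ∀ c : V → Fin k, ∀ u v, G.Adj u v → c u ≠ c v := by
    intro c u v hadj
    exact absurd hadj (by rw [Subsingleton.elim u v]; exact G.irrefl)
  unfold ncol
  rw [Nat.card_congr (Equiv.subtypeUnivEquiv hprop), Nat.card_eq_fintype_card,
    Fintype.card_fun, h, pow_one, Fintype.card_fin]

/-- deleting a leaf `v` with unique neighbour `u` multiplies the colouring count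
by `k - 1`. -/
lemma ncol_leaf {V : Type} [Fintype V] (G : SimpleGraph V) (v u : V)
    (hu : ∀ w, G.Adj v w ↔ w = u) (k : ℕ) :
    ncol G k = ncol (G.comap (Subtype.val : {w : V // w ≠ v} → V)) k * (k - 1) := by
  classical
  have hvu : G.Adj v u := (hu u).mpr rfl
  have huv : u ≠ v := (G.ne_of_adj hvu).symm
  set H := G.comap (Subtype.val : {w : V // w ≠ v} → V) with hH
  set u' : {w : V // w ≠ v} := ⟨u, huv⟩ with hu'
  unfold ncol
  rw [Nat.card_eq_fintype_card, Nat.card_eq_fintype_card, Fintype.card_subtype,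
    Fintype.card_subtype]
  set A := Finset.univ.filter (fun c : V → Fin k => ∀ x y, G.Adj x y → c x ≠ c y) with hA
  set B := Finset.univ.filter
    (fun c : {w : V // w ≠ v} → Fin k => ∀ x y, H.Adj x y → c x ≠ c y) with hB
  have hmaps : ∀ c ∈ A, (fun w : {w : V // w ≠ v} => c w.1) ∈ B := by
    intro c hc
    rw [hA, Finset.mem_filter] at hc
    rw [hB, Finset.mem_filter]
    exact ⟨Finset.mem_univ _, fun x y hxy => hc.2 x.1 y.1 hxy⟩
  rw [Finset.card_eq_sum_card_fiberwise hmaps]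
  have hfib : ∀ c' ∈ B, (A.filter (fun c => (fun w : {w : V // w ≠ v} => c w.1) = c')).card
      = k - 1 := by
    intro c' hc'
    rw [hB, Finset.mem_filter] at hc'
    have hcard : (Finset.univ.erase (c' u')).card = k - 1 := by
      rw [Finset.card_erase_of_mem (Finset.mem_univ _), Finset.card_univ, Fintype.card_fin]
    rw [← hcard]
    refine Finset.card_bij (fun c _ => c v) ?_ ?_ ?_
    · intro c hc
      rw [Finset.mem_filter, hA, Finset.mem_filter] at hc
      obtain ⟨⟨-, hproper⟩, hres⟩ := hc
      refine Finset.mem_erase.mpr ⟨?_, Finset.mem_univ _⟩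
      have h1 : c v ≠ c u := hproper v u hvu
      exact fun hbad => h1 (hbad.trans (congrFun hres u').symm)
    · intro c1 h1 c2 h2 hval
      rw [Finset.mem_filter] at h1 h2
      funext w
      by_cases hw : w = v
      · rw [hw]; exact hval
      · have := congrFun (h1.2.trans h2.2.symm) ⟨w, hw⟩
        exact this
    · intro j hj
      rw [Finset.mem_erase] at hj
      refine ⟨fun w => if h : w = v then j else c' ⟨w, h⟩, ?_, ?_⟩
      · rw [Finset.mem_filter, hA, Finset.mem_filter]
        refine ⟨⟨Finset.mem_univ _, ?_⟩, ?_⟩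
        · intro x y hxy
          show (if h : x = v then j else c' ⟨x, h⟩) ≠ (if h : y = v then j else c' ⟨y, h⟩)
          by_cases hx : x = v
          · have hy : y = u := (hu y).mp (hx ▸ hxy)
            have hyv : y ≠ v := hy ▸ huv
            rw [dif_pos hx, dif_neg hyv]
            have he : c' ⟨y, hyv⟩ = c' u' := by congr 1; exact Subtype.ext hy
            rw [he]
            exact hj.1
          · by_cases hy : y = v
            · have hx2 : x = u := (hu x).mp (hy ▸ hxy.symm)
              rw [dif_neg hx, dif_pos hy]
              have he : c' ⟨x, hx⟩ = c' u' := by congr 1; exact Subtype.ext hx2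
              rw [he]
              exact fun hcontra => hj.1 hcontra.symm
            · rw [dif_neg hx, dif_neg hy]
              exact hc'.2 ⟨x, hx⟩ ⟨y, hy⟩ hxy
        · funext w
          exact dif_neg w.2
      · exact dif_pos rfl
  rw [Finset.sum_congr rfl hfib, Finset.sum_const, smul_eq_mul]
-- Section 4: trees have leaves; deleting a leaf keeps a tree

lemma exists_leaf {V : Type} [Fintype V] (G : SimpleGraph V) (hG : G.IsTree)
    (h2 : 2 ≤ Fintype.card V) : ∃ v u : V, ∀ w, G.Adj v w ↔ w = u := by
  classical
  have hconn : G.Connected := hG.isConnected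
  -- every vertex has positive degree
  have hdegpos : ∀ v : V, 0 < G.degree v := by
    intro v
    rw [SimpleGraph.degree_pos_iff_exists_adj]
    obtain ⟨w, hw⟩ := Fintype.exists_ne_of_one_lt_card (by omega) v
    obtain ⟨p⟩ := hconn.preconnected v w
    obtain ⟨x, hadj, -, -⟩ := SimpleGraph.Walk.exists_eq_cons_of_ne (Ne.symm hw) p
    exact ⟨x, hadj⟩
  -- some vertex has degree exactly one
  have hsum : ∑ v : V, G.degree v = 2 * (Fintype.card V - 1) := by
    rw [SimpleGraph.sum_degrees_eq_twice_card_edges]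
    congr 1
    have := hG.card_edgeFinset
    omega
  have hleaf : ∃ v : V, G.degree v = 1 := by
    by_contra hno
    push_neg at hno
    have hge : ∀ v : V, 2 ≤ G.degree v := by
      intro v
      have := hdegpos v
      have := hno v
      omega
    have : Finset.univ.card • 2 ≤ ∑ v : V, G.degree v :=
      Finset.card_nsmul_le_sum _ _ _ (fun v _ => hge v)
    rw [hsum] at this
    simp only [smul_eq_mul, Finset.card_univ] at this
    omega
  obtain ⟨v, hv⟩ := hleaf
  obtain ⟨u, hu⟩ := Finset.card_eq_one.mp hv
  refine ⟨v, u, fun w => ?_⟩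
  rw [← SimpleGraph.mem_neighborFinset, hu, Finset.mem_singleton]

lemma reachable_lift {V : Type} (G : SimpleGraph V) (v : V) :
    ∀ {a b : V} (p : G.Walk a b), v ∉ p.support → ∀ (ha : a ≠ v) (hb : b ≠ v),
      (G.comap (Subtype.val : {w : V // w ≠ v} → V)).Reachable ⟨a, ha⟩ ⟨b, hb⟩ := by
  intro a b p
  induction p with
  | nil => intro _ ha hb; exact SimpleGraph.Reachable.refl _
  | @cons a x b hadj q ih =>
      intro h ha hb
      rw [SimpleGraph.Walk.support_cons, List.mem_cons] at h
      push_neg at h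
      have hx : x ≠ v := fun hxv => h.2 (hxv ▸ q.start_mem_support)
      have step : (G.comap (Subtype.val : {w : V // w ≠ v} → V)).Adj ⟨a, ha⟩ ⟨x, hx⟩ := hadj
      exact (step.reachable).trans (ih h.2 hx hb)

lemma isTree_del {V : Type} (G : SimpleGraph V) (hG : G.IsTree) (v u : V)
    (hu : ∀ w, G.Adj v w ↔ w = u) :
    (G.comap (Subtype.val : {w : V // w ≠ v} → V)).IsTree := by
  classical
  have hvu : G.Adj v u := (hu u).mpr rfl
  have huv : u ≠ v := (G.ne_of_adj hvu).symm
  set H := G.comap (Subtype.val : {w : V // w ≠ v} → V) with hH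
  set u' : {w : V // w ≠ v} := ⟨u, huv⟩ with hu'
  rw [SimpleGraph.isTree_iff]
  constructor
  · -- connectivity: every vertex reaches u'
    have key : ∀ a : {w : V // w ≠ v}, H.Reachable a u' := by
      rintro ⟨a, ha⟩
      obtain ⟨p0⟩ := hG.isConnected.preconnected a v
      set p : G.Path a v := p0.toPath with hp
      have hrev : (p.1.reverse).IsPath := p.2.reverse
      obtain ⟨x, hadj, q, hq⟩ := SimpleGraph.Walk.exists_eq_cons_of_ne (Ne.symm ha) p.1.reverse
      have hx : x = u := (hu x).mp hadj
      rw [hq, SimpleGraph.Walk.cons_isPath_iff] at hrev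
      subst hx
      exact (reachable_lift G v q hrev.2 huv ha).symm
    rw [SimpleGraph.connected_iff]
    exact ⟨fun a b => (key a).trans (key b).symm, ⟨u'⟩⟩
  · -- acyclicity via path uniqueness
    rw [SimpleGraph.isAcyclic_iff_path_unique]
    intro a b p q
    have hf : Function.Injective (fun w : {w : V // w ≠ v} => w.1) := Subtype.val_injective
    let f : H →g G := ⟨Subtype.val, fun h => h⟩
    have hfi : Function.Injective (f : {w : V // w ≠ v} → V) := Subtype.val_injective
    have h1 : (p.1.map f).IsPath := SimpleGraph.Walk.map_isPath_of_injective hfi p.2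
    have h2 : (q.1.map f).IsPath := SimpleGraph.Walk.map_isPath_of_injective hfi q.2
    have := SimpleGraph.isAcyclic_iff_path_unique.mp hG.IsAcyclic ⟨p.1.map f, h1⟩ ⟨q.1.map f, h2⟩
    have heq : p.1.map f = q.1.map f := Subtype.ext_iff.mp this
    exact Subtype.ext (SimpleGraph.Walk.map_injective_of_injective hfi a b heq)

lemma tree_ncol : ∀ (m : ℕ) {V : Type} [Fintype V] (G : SimpleGraph V), G.IsTree →
    Fintype.card V = m → ∀ k : ℕ, ncol G k = k * (k - 1) ^ (m - 1) := by
  intro m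
  induction m using Nat.strong_induction_on with
  | _ m ih =>
    intro V _ G hG hcard k
    match m, hcard with
    | 0, hcard =>
        exfalso
        have : IsEmpty V := Fintype.card_eq_zero_iff.mp hcard
        exact (hG.isConnected.nonempty).elim fun x => this.false x
    | 1, hcard => simpa using ncol_of_card_one G hcard k
    | (m + 2), hcard =>
        obtain ⟨v, u, hu⟩ := exists_leaf G hG (by omega)
        have htree' := isTree_del G hG v u hu
        have hcard' : Fintype.card {w : V // w ≠ v} = m + 1 := by
          rw [Fintype.card_subtype_compl (p := fun w => w = v)]  -- may need adjust
          rw [hcard]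
          simp
        have hrec := ih (m + 1) (by omega) _ htree' hcard' k
        rw [ncol_leaf G v u hu k, hrec]
        have : m + 1 - 1 = m := by omega
        rw [this]
        have : m + 2 - 1 = m + 1 := by omega
        rw [this, pow_succ]
        ring
-- Section 5: colouring count for path graphs

lemma pathGraph_ncol : ∀ n : ℕ, 1 ≤ n → ∀ k : ℕ,
    ncol (SimpleGraph.pathGraph n) k = k * (k - 1) ^ (n - 1) := by
  intro n
  induction n with
  | zero => omega
  | succ n ihn =>
      intro _ k
      rcases Nat.eq_or_lt_of_le (Nat.one_le_iff_ne_zero.mpr (Nat.succ_ne_zero n)) with h1 | h1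
      · -- n + 1 = 1
        have hn0 : n = 0 := by omega
        subst hn0
        simpa using ncol_of_card_one (SimpleGraph.pathGraph 1) (by simp) k
      · have hn : 1 ≤ n := by omega
        set v : Fin (n+1) := ⟨n, by omega⟩ with hv
        set u : Fin (n+1) := ⟨n-1, by omega⟩ with huu
        have hu : ∀ w, (SimpleGraph.pathGraph (n+1)).Adj v w ↔ w = u := by
          intro w
          rw [SimpleGraph.pathGraph_adj, Fin.ext_iff]
          have := w.isLt
          show (n + 1 = w.val ∨ w.val + 1 = n) ↔ w.val = n - 1
          omega
        rw [ncol_leaf _ v u hu k]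
        have φ : ((SimpleGraph.pathGraph (n+1)).comap
            (Subtype.val : {w : Fin (n+1) // w ≠ v} → Fin (n+1))) ≃g
            SimpleGraph.pathGraph n := by
          refine ⟨⟨fun w => ⟨w.1.val, ?_⟩, fun i => ⟨⟨i.val, by omega⟩, ?_⟩, ?_, ?_⟩, ?_⟩
          · have h1 := w.1.isLt
            have h2 : (w.1 : ℕ) ≠ n := fun hh => w.2 (Fin.ext hh)
            show w.1.val < n
            omega
          · intro h
            rw [Fin.ext_iff] at h
            have := i.isLt
            have h' : (i : ℕ) = n := h
            omega
          · intro w; apply Subtype.ext; apply Fin.ext; rfl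
          · intro i; apply Fin.ext; rfl
          · intro x y
            simp only [Equiv.coe_fn_mk, SimpleGraph.comap_adj, SimpleGraph.pathGraph_adj]
        have h3 : n - 1 + 1 = n := by omega
        rw [ncol_iso φ, ihn hn k, Nat.add_sub_cancel, mul_assoc, ← pow_succ, h3]
-- Section 6: assembly

lemma card_le_sum {μ : Multiset ℕ} (h : ∀ m ∈ μ, 0 < m) : Multiset.card μ ≤ μ.sum := by
  induction μ using Multiset.induction_on with
  | empty => simp
  | cons m μ ih =>
      simp only [Multiset.card_cons, Multiset.sum_cons]
      have h1 := h m (Multiset.mem_cons_self m μ)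
      have h2 := ih (fun x hx => h x (Multiset.mem_cons_of_mem hx))
      omega

lemma prod_count {k : ℕ} : ∀ {μ : Multiset ℕ}, (∀ m ∈ μ, 0 < m) →
    (μ.map (fun m => ((k * (k - 1) ^ (m - 1) : ℕ) : ℚ))).prod =
      (k : ℚ) ^ (Multiset.card μ) * ((k - 1 : ℕ) : ℚ) ^ (μ.sum - Multiset.card μ) := by
  intro μ
  induction μ using Multiset.induction_on with
  | empty => simp
  | cons m μ ih =>
      intro h
      have h1 := h m (Multiset.mem_cons_self m μ)
      have htail : ∀ x ∈ μ, 0 < x := fun x hx => h x (Multiset.mem_cons_of_mem hx)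
      have h2 := card_le_sum htail
      simp only [Multiset.map_cons, Multiset.prod_cons, Multiset.card_cons,
        Multiset.sum_cons, ih htail]
      have harith : m + μ.sum - (Multiset.card μ + 1) = (m - 1) + (μ.sum - Multiset.card μ) := by
        omega
      rw [harith, pow_add, pow_succ]
      push_cast
      ring

lemma isHomog_csf {m : ℕ} {W : Type} [Fintype W] (Gm : SimpleGraph W)
    (hcard : Fintype.card W = m) : IsHomog m (csf Gm) := by
  have h := isHomog_wcsf Gm (fun _ => 1)
  have h1 : (∑ _v : W, 1) = m := by
    rw [Finset.sum_const, smul_eq_mul, mul_one, Finset.card_univ, hcard]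
  rwa [h1] at h

lemma Phi_csf_count {m : ℕ} {W : Type} [Fintype W] (Gm : SimpleGraph W) (k : ℕ)
    (hcard : Fintype.card W = m) (hcount : ncol Gm k = k * (k - 1) ^ (m - 1)) :
    Phi k m (csf Gm) = ((k * (k - 1) ^ (m - 1) : ℕ) : ℚ) := by
  unfold csf
  have h1 : (∑ _v : W, (1 : ℕ)) = m := by
    rw [Finset.sum_const, smul_eq_mul, mul_one, Finset.card_univ, hcard]
  have h2 := Phi_wcsf Gm (ω := fun _ => 1) (fun _ => one_pos) k
  rw [h1] at h2
  rw [h2]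
  norm_cast

lemma Phi_prodside {N : ℕ} (μ : Multiset ℕ) (hsum : μ.sum = N) (hpos : ∀ m ∈ μ, 0 < m)
    (k : ℕ) {F : ℕ → MvPowerSeries ℕ ℚ}
    (hhom : ∀ m ∈ μ, IsHomog m (F m))
    (hcount : ∀ m ∈ μ, Phi k m (F m) = ((k * (k - 1) ^ (m - 1) : ℕ) : ℚ)) :
    Phi k N ((μ.map F).prod) =
      (k : ℚ) ^ (Multiset.card μ) * ((k - 1 : ℕ) : ℚ) ^ (N - Multiset.card μ) := by
  subst hsum
  rw [Phi_prod hhom, Multiset.map_congr rfl hcount, prod_count hpos]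

lemma partition_len_le {N : ℕ} (l : N.Partition) : l.parts.card ≤ N := by
  have := card_le_sum (fun m hm => l.parts_pos hm)
  rwa [l.parts_sum] at this
/-- let `{T_n}` be any family of trees with `T_n` having `n` vertices and let
`X_{T_λ}` be the corresponding tree basis.  For any vertex-weighted graph `(G,ω)` of total
weight `N`, expanding `X_{(G,ω)}` in the tree basis and in the path basis, for every `k` the
sum of coefficients over partitions of length `k` is the same; i.e. the tree polynomial is
independent of the choice of tree basis. -/
theorem stmt_9 (T : (n : ℕ) → SimpleGraph (Fin n)) (hT : ∀ n, 0 < n → (T n).IsTree)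
    {V : Type} [Fintype V] (G : SimpleGraph V) (ω : V → ℕ) (hω : ∀ v, 0 < ω v)
    (N : ℕ) (hN : ∑ v, ω v = N)
    (a b : N.Partition → ℚ)
    (ha : wcsf G ω = ∑ l : N.Partition, a l • (l.parts.map (fun m => csf (T m))).prod)
    (hb : wcsf G ω = ∑ l : N.Partition, b l • XP l.parts) :
    ∀ k : ℕ, ∑ l ∈ Finset.univ.filter (fun l : N.Partition => l.parts.card = k), a l =
      ∑ l ∈ Finset.univ.filter (fun l : N.Partition => l.parts.card = k), b l := by
  classical
  -- the common value of both expansions, evaluated by `Phi k N`, for every `k ≥ 1`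
  have key : ∀ k : ℕ, 0 < k →
      ∑ l : N.Partition, (a l - b l) *
        ((k : ℚ) ^ (l.parts.card) * ((k - 1 : ℕ) : ℚ) ^ (N - l.parts.card)) = 0 := by
    intro k hk
    have h1 := congrArg (Phi k N) (ha.symm.trans hb)
    rw [Phi_sum, Phi_sum] at h1
    have hta : ∀ l : N.Partition,
        Phi k N (a l • (l.parts.map (fun m => csf (T m))).prod) =
          a l * ((k : ℚ) ^ (l.parts.card) * ((k - 1 : ℕ) : ℚ) ^ (N - l.parts.card)) := by
      intro l
      rw [Phi_smul]
      congr 1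
      refine Phi_prodside l.parts l.parts_sum (fun m hm => l.parts_pos hm) k ?_ ?_
      · intro m hm
        exact isHomog_csf (T m) (Fintype.card_fin m)
      · intro m hm
        exact Phi_csf_count (T m) k (Fintype.card_fin m)
          (tree_ncol m (T m) (hT m (l.parts_pos hm)) (Fintype.card_fin m) k)
    have htb : ∀ l : N.Partition,
        Phi k N (b l • XP l.parts) =
          b l * ((k : ℚ) ^ (l.parts.card) * ((k - 1 : ℕ) : ℚ) ^ (N - l.parts.card)) := by
      intro l
      rw [Phi_smul]
      congr 1
      unfold XP
      refine Phi_prodside l.parts l.parts_sum (fun m hm => l.parts_pos hm) k ?_ ?_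
      · intro m hm
        exact isHomog_csf (SimpleGraph.pathGraph m) (Fintype.card_fin m)
      · intro m hm
        exact Phi_csf_count (SimpleGraph.pathGraph m) k (Fintype.card_fin m)
          (pathGraph_ncol m (l.parts_pos hm) k)
    rw [Finset.sum_congr rfl (fun l _ => hta l), Finset.sum_congr rfl (fun l _ => htb l)] at h1
    rw [Finset.sum_congr rfl (fun l (_ : l ∈ Finset.univ) => sub_mul (a l) (b l)
      ((k : ℚ) ^ (l.parts.card) * ((k - 1 : ℕ) : ℚ) ^ (N - l.parts.card))),
      Finset.sum_sub_distrib, h1, sub_self]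
  -- the corresponding polynomial vanishes at infinitely many points, hence is zero
  set Q : Polynomial ℚ := ∑ l : N.Partition, Polynomial.C (a l - b l) *
      ((Polynomial.X - 1) ^ (N - l.parts.card) * Polynomial.X ^ (l.parts.card)) with hQ
  have hQeval : ∀ k : ℕ, 0 < k → Q.eval (k : ℚ) = 0 := by
    intro k hk
    rw [hQ, Polynomial.eval_finset_sum, ← key k hk]
    refine Finset.sum_congr rfl fun l _ => ?_
    have hc : ((k - 1 : ℕ) : ℚ) = (k : ℚ) - 1 := by
      rw [Nat.cast_sub hk, Nat.cast_one]
    simp only [Polynomial.eval_mul, Polynomial.eval_pow, Polynomial.eval_sub,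
      Polynomial.eval_C, Polynomial.eval_X, Polynomial.eval_one, hc]
    ring
  have hQ0 : Q = 0 := by
    refine Polynomial.eq_zero_of_infinite_isRoot Q ?_
    refine Set.infinite_of_injective_forall_mem
      (f := fun i : ℕ => ((i + 1 : ℕ) : ℚ)) ?_ ?_
    · intro i j hij
      have h2 : ((i + 1 : ℕ) : ℚ) = ((j + 1 : ℕ) : ℚ) := hij
      have h3 : i + 1 = j + 1 := by exact_mod_cast h2
      omega
    · intro i
      exact hQeval (i + 1) (Nat.succ_pos i)
  -- extract the grouped coefficients
  have hall : ∀ j : ℕ,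
      (∑ l ∈ Finset.univ.filter (fun l : N.Partition => l.parts.card = j), (a l - b l)) = 0 := by
    intro j
    induction j using Nat.strong_induction_on with
    | _ j ih =>
      by_cases hjN : j ≤ N
      · have h0 : Q.coeff j = 0 := by rw [hQ0]; simp
        have hterm : ∀ l : N.Partition,
            (Polynomial.C (a l - b l) *
              ((Polynomial.X - 1) ^ (N - l.parts.card) *
                Polynomial.X ^ (l.parts.card))).coeff j =
            (a l - b l) * (if l.parts.card ≤ j then
              ((Polynomial.X - 1 : Polynomial ℚ) ^ (N - l.parts.card)).coeff (j - l.parts.card)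
              else 0) := by
          intro l
          rw [Polynomial.coeff_C_mul, Polynomial.coeff_mul_X_pow']
        rw [hQ, Polynomial.finset_sum_coeff,
          Finset.sum_congr rfl (fun l _ => hterm l)] at h0
        -- group by length
        have hgroup : (∑ i ∈ Finset.range (N + 1),
            ∑ l ∈ Finset.univ.filter (fun l : N.Partition => l.parts.card = i),
              (a l - b l) * (if l.parts.card ≤ j then
                ((Polynomial.X - 1 : Polynomial ℚ) ^ (N - l.parts.card)).coeff
                  (j - l.parts.card) else 0)) =
            ∑ l : N.Partition, (a l - b l) * (if l.parts.card ≤ j then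
              ((Polynomial.X - 1 : Polynomial ℚ) ^ (N - l.parts.card)).coeff
                (j - l.parts.card) else 0) :=
          Finset.sum_fiberwise_of_maps_to
            (fun l _ => Finset.mem_range.mpr (Nat.lt_succ_of_le (partition_len_le l))) _
        rw [← hgroup] at h0
        have hinner : ∀ i ∈ Finset.range (N + 1),
            (∑ l ∈ Finset.univ.filter (fun l : N.Partition => l.parts.card = i),
              (a l - b l) * (if l.parts.card ≤ j then
                ((Polynomial.X - 1 : Polynomial ℚ) ^ (N - l.parts.card)).coeff
                  (j - l.parts.card) else 0)) =
            (∑ l ∈ Finset.univ.filter (fun l : N.Partition => l.parts.card = i),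
              (a l - b l)) * (if i ≤ j then
              ((Polynomial.X - 1 : Polynomial ℚ) ^ (N - i)).coeff (j - i) else 0) := by
          intro i _
          rw [Finset.sum_mul]
          refine Finset.sum_congr rfl fun l hl => ?_
          rw [Finset.mem_filter] at hl
          rw [hl.2]
        rw [Finset.sum_congr rfl hinner] at h0
        -- all terms except `i = j` vanish
        rw [Finset.sum_eq_single j] at h0
        · rw [if_pos le_rfl, Nat.sub_self, Polynomial.coeff_zero_eq_eval_zero] at h0
          have heval : ((Polynomial.X - 1 : Polynomial ℚ) ^ (N - j)).eval 0 = (-1) ^ (N - j) := by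
            simp
          rw [heval] at h0
          have hne : ((-1 : ℚ)) ^ (N - j) ≠ 0 := by
            intro hzero
            have := pow_eq_zero_iff (n := N - j) (M₀ := ℚ) (a := -1)
            simp at hzero
          exact (mul_eq_zero.mp h0).resolve_right hne
        · intro i hi hij
          rcases Nat.lt_or_ge i j with hlt | hgt
          · rw [ih i hlt, zero_mul]
          · have : ¬ i ≤ j := by omega
            rw [if_neg this, mul_zero]
        · intro hjmem
          exact absurd (Finset.mem_range.mpr (Nat.lt_succ_of_le hjN)) hjmem
      · -- j > N : the filter is empty
        convert Finset.sum_empty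
        rw [Finset.filter_eq_empty_iff]
        intro l _
        have := partition_len_le l
        omega
  intro k
  have hk := hall k
  rw [Finset.sum_sub_distrib] at hk
  linarith
end
end

section
/- Gluing formula for the tree polynomial: if H is the graph obtained by gluing graphs G₁ and G₂ along a k-clique K, then τ_H · τ_K = τ_{G₁} · τ_{G₂}. -/
open Polynomial

noncomputable section
open scoped Classical

/-- counting finsupp of a coloring -/
private def cnt {V : Type} [Fintype V] (κ : V → ℕ) : ℕ →₀ ℕ := ∑ v : V, Finsupp.single (κ v) 1

private lemma cnt_apply {V : Type} [Fintype V] (κ : V → ℕ) (i : ℕ) :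
    cnt κ i = ∑ v ∈ Finset.univ.filter (fun v => κ v = i), (1 : ℕ) := by
  rw [cnt, Finsupp.finset_sum_apply, Finset.sum_filter]
  exact Finset.sum_congr rfl fun v _ => by simp [Finsupp.single_apply]

private lemma cnt_sum {V : Type} [Fintype V] (κ : V → ℕ) :
    (cnt κ).sum (fun _ x => x) = Fintype.card V := by
  rw [cnt, ← Finsupp.sum_finsetSum_index (fun _ => rfl) (fun _ _ _ => rfl)]
  simp [Finsupp.sum_single_index]

private lemma mem_support_cnt {V : Type} [Fintype V] (κ : V → ℕ) (v : V) :
    κ v ∈ (cnt κ).support := by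
  rw [Finsupp.mem_support_iff, cnt_apply]
  have : v ∈ Finset.univ.filter (fun w => κ w = κ v) := by simp
  simp only [Finset.sum_const, smul_eq_mul, mul_one]
  have h := Finset.card_pos.mpr ⟨v, this⟩
  omega

/-- evaluation: sum of coefficients supported in `range m` with total degree `n` -/
private def ev (m n : ℕ) (F : MvPowerSeries ℕ ℚ) : ℚ :=
  ∑ d ∈ Finset.finsuppAntidiag (Finset.range m) n, MvPowerSeries.coeff d F

private def Homog (n : ℕ) (F : MvPowerSeries ℕ ℚ) : Prop :=
  ∀ d : ℕ →₀ ℕ, MvPowerSeries.coeff d F ≠ 0 → d.sum (fun _ x => x) = n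

private lemma finsupp_sum_add (p q : ℕ →₀ ℕ) :
    (p + q).sum (fun _ x => x) = p.sum (fun _ x => x) + q.sum (fun _ x => x) :=
  Finsupp.sum_add_index' (fun _ => rfl) (fun _ _ _ => rfl)

private lemma homog_mul {n₁ n₂ : ℕ} {F G : MvPowerSeries ℕ ℚ}
    (hF : Homog n₁ F) (hG : Homog n₂ G) : Homog (n₁ + n₂) (F * G) := by
  intro d hd
  rw [MvPowerSeries.coeff_mul] at hd
  obtain ⟨p, hp, hne⟩ := Finset.exists_ne_zero_of_sum_ne_zero hd
  rw [Finset.HasAntidiagonal.mem_antidiagonal] at hp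
  rw [← hp, finsupp_sum_add, hF p.1 (left_ne_zero_of_mul hne), hG p.2 (right_ne_zero_of_mul hne)]

private lemma homog_one : Homog 0 (1 : MvPowerSeries ℕ ℚ) := by
  intro d hd
  by_cases h : d = 0
  · simp [h]
  · exfalso; apply hd; rw [MvPowerSeries.coeff_one, if_neg h]

private lemma support_left_subset {p q : ℕ →₀ ℕ} : p.support ⊆ (p + q).support := by
  intro i hi
  rw [Finsupp.mem_support_iff] at hi ⊢
  simp only [Finsupp.add_apply]
  omega

private lemma ev_mul (m : ℕ) {n₁ n₂ : ℕ} {F G : MvPowerSeries ℕ ℚ}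
    (hF : Homog n₁ F) (hG : Homog n₂ G) :
    ev m (n₁ + n₂) (F * G) = ev m n₁ F * ev m n₂ G := by
  classical
  rw [ev, ev, ev, Finset.sum_mul_sum, ← Finset.sum_product']
  simp_rw [MvPowerSeries.coeff_mul]
  have hdisj : ∀ x ∈ Finset.finsuppAntidiag (Finset.range m) (n₁ + n₂), ∀ y ∈
      Finset.finsuppAntidiag (Finset.range m) (n₁ + n₂), x ≠ y →
      Disjoint (Finset.HasAntidiagonal.antidiagonal x) (Finset.HasAntidiagonal.antidiagonal y) := by
    intro x _ y _ hxy
    apply Finset.disjoint_left.mpr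
    intro p hp hq
    rw [Finset.HasAntidiagonal.mem_antidiagonal] at hp hq
    exact hxy (hp ▸ hq)
  rw [← Finset.sum_biUnion hdisj]
  refine (Finset.sum_subset ?_ ?_).symm
  · rintro ⟨p, q⟩ hpq
    rw [Finset.mem_product, Finset.mem_finsuppAntidiag', Finset.mem_finsuppAntidiag'] at hpq
    apply Finset.mem_biUnion.mpr
    refine ⟨p + q, ?_, Finset.HasAntidiagonal.mem_antidiagonal.mpr rfl⟩
    rw [Finset.mem_finsuppAntidiag']
    constructor
    · rw [finsupp_sum_add, hpq.1.1, hpq.2.1]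
    · exact Finsupp.support_add.trans (Finset.union_subset hpq.1.2 hpq.2.2)
  · rintro ⟨p, q⟩ hpq hnm
    rw [Finset.mem_biUnion] at hpq
    obtain ⟨d, hd, hpq⟩ := hpq
    rw [Finset.HasAntidiagonal.mem_antidiagonal] at hpq
    rw [Finset.mem_finsuppAntidiag'] at hd
    have hsupp : p.support ⊆ Finset.range m ∧ q.support ⊆ Finset.range m := by
      constructor
      · exact (support_left_subset).trans (hpq ▸ hd.2)
      · refine Finset.Subset.trans ?_ (hpq ▸ hd.2)
        rw [add_comm]
        exact support_left_subset
    by_cases h1 : MvPowerSeries.coeff p F = 0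
    · simp [h1]
    by_cases h2 : MvPowerSeries.coeff q G = 0
    · simp [h2]
    exfalso
    apply hnm
    rw [Finset.mem_product, Finset.mem_finsuppAntidiag', Finset.mem_finsuppAntidiag']
    exact ⟨⟨hF p h1, hsupp.1⟩, ⟨hG q h2, hsupp.2⟩⟩

private lemma ev_sum {ι : Type*} (s : Finset ι) (f : ι → MvPowerSeries ℕ ℚ) (m n : ℕ) :
    ev m n (∑ i ∈ s, f i) = ∑ i ∈ s, ev m n (f i) := by
  unfold ev
  rw [Finset.sum_comm]
  exact Finset.sum_congr rfl fun d _ => map_sum _ _ _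

private lemma ev_smul (a : ℚ) (F : MvPowerSeries ℕ ℚ) (m n : ℕ) :
    ev m n (a • F) = a * ev m n F := by
  unfold ev
  rw [Finset.mul_sum]
  exact Finset.sum_congr rfl fun d _ => by
    rw [map_smul, smul_eq_mul]

private lemma ev_one (m : ℕ) : ev m 0 (1 : MvPowerSeries ℕ ℚ) = 1 := by
  have h : Finset.finsuppAntidiag (Finset.range m) 0 = {0} := by
    ext d
    rw [Finset.mem_finsuppAntidiag', Finset.mem_singleton]
    constructor
    · rintro ⟨h1, _⟩
      ext i
      by_cases hi : i ∈ d.support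
      · exfalso
        have hne := Finsupp.mem_support_iff.mp hi
        have hle : d i ≤ d.sum (fun _ x => x) :=
          Finset.single_le_sum (f := fun j => d j) (fun _ _ => Nat.zero_le _) hi
        omega
      · simpa using Finsupp.notMem_support_iff.mp hi
    · rintro rfl; simp
  rw [ev, h]
  simp

private lemma coeff_csf {V : Type} [Fintype V] (G : SimpleGraph V) (d : ℕ →₀ ℕ) :
    MvPowerSeries.coeff d (csf G) =
      (Nat.card {κ : V → ℕ // (∀ u v, G.Adj u v → κ u ≠ κ v) ∧ cnt κ = d} : ℚ) := by
  have : MvPowerSeries.coeff d (csf G) = (Nat.card {κ : V → ℕ //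
      (∀ u v, G.Adj u v → κ u ≠ κ v) ∧
      ∀ i : ℕ, ∑ v ∈ Finset.univ.filter (fun v => κ v = i), (1:ℕ) = d i} : ℚ) := rfl
  rw [this]
  congr 1
  apply Nat.card_congr
  apply Equiv.subtypeEquivRight
  intro κ
  apply and_congr_right
  intro _
  constructor
  · intro h; ext i; rw [cnt_apply]; exact h i
  · intro h i; rw [← cnt_apply, h]

private lemma homog_csf {V : Type} [Fintype V] (G : SimpleGraph V) :
    Homog (Fintype.card V) (csf G) := by
  intro d hd
  rw [coeff_csf] at hd
  have : Nat.card {κ : V → ℕ // (∀ u v, G.Adj u v → κ u ≠ κ v) ∧ cnt κ = d} ≠ 0 := by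
    intro h; rw [h] at hd; simp at hd
  obtain ⟨⟨κ, _, hκ⟩, _⟩ := (Nat.card_ne_zero.mp this)
  rw [← hκ, cnt_sum]

private instance colFinite {V : Type} [Fintype V] (G : SimpleGraph V) (d : ℕ →₀ ℕ) :
    Finite {κ : V → ℕ // (∀ u v, G.Adj u v → κ u ≠ κ v) ∧ cnt κ = d} := by
  apply Finite.of_injective (β := V → {i // i ∈ d.support})
    (fun κ => fun v => ⟨κ.1 v, by
      have h := mem_support_cnt κ.1 v
      rwa [κ.2.2] at h⟩)
  intro κ κ' h
  apply Subtype.ext; funext v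
  exact congrArg Subtype.val (congrFun h v)

private lemma natCard_sigma {α : Type*} (s : Finset α) (f : α → Type*) [∀ a, Finite (f a)] :
    Nat.card (Σ d : {d // d ∈ s}, f d.1) = ∑ d ∈ s, Nat.card (f d) := by
  classical
  have : ∀ a : {d // d ∈ s}, Fintype (f a.1) := fun a => Fintype.ofFinite _
  rw [Nat.card_eq_fintype_card, Fintype.card_sigma]
  rw [← Finset.sum_coe_sort s (fun d => Nat.card (f d))]
  exact Finset.sum_congr rfl fun a _ => by rw [Nat.card_eq_fintype_card]

private lemma natCard_sigma_const {α : Type*} [Finite α] (f : α → Type*) [∀ a, Finite (f a)]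
    (c : ℕ) (h : ∀ a, Nat.card (f a) = c) : Nat.card (Σ a, f a) = Nat.card α * c := by
  classical
  cases nonempty_fintype α
  have : ∀ a, Fintype (f a) := fun a => Fintype.ofFinite _
  rw [Nat.card_eq_fintype_card, Nat.card_eq_fintype_card, Fintype.card_sigma]
  have : ∀ a : α, Fintype.card (f a) = c := fun a => by rw [← Nat.card_eq_fintype_card, h]
  simp [this, Finset.sum_const, Finset.card_univ, mul_comm]

private def PC {V : Type} (G : SimpleGraph V) (m : ℕ) : Type :=
  {c : V → Fin m // ∀ u v, G.Adj u v → c u ≠ c v}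

private instance {V : Type} [Fintype V] (G : SimpleGraph V) (m : ℕ) : Finite (PC G m) :=
  Subtype.finite

private lemma ev_csf {V : Type} [Fintype V] (G : SimpleGraph V) (m n : ℕ)
    (hn : Fintype.card V = n) :
    ev m n (csf G) = (Nat.card (PC G m) : ℚ) := by
  classical
  unfold ev
  simp_rw [coeff_csf]
  rw [← Nat.cast_sum]
  congr 1
  rw [← natCard_sigma (Finset.finsuppAntidiag (Finset.range m) n)
    (fun d => {κ : V → ℕ // (∀ u v, G.Adj u v → κ u ≠ κ v) ∧ cnt κ = d})]
  apply Nat.card_congr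
  refine ⟨fun p => ⟨fun v => ⟨p.2.1 v, ?_⟩, ?_⟩, fun c =>
    ⟨⟨cnt (fun v => (c.1 v : ℕ)), ?_⟩, ⟨fun v => (c.1 v : ℕ), fun u v huv hc => c.2 u v huv (by
      apply Fin.ext; exact hc), rfl⟩⟩, ?_, ?_⟩
  · -- bound
    have h1 := mem_support_cnt p.2.1 v
    rw [p.2.2.2] at h1
    have h2 := (Finset.mem_finsuppAntidiag'.mp p.1.2).2 h1
    exact Finset.mem_range.mp h2
  · -- proper
    intro u v huv hc
    exact p.2.2.1 u v huv (congrArg Fin.val hc)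
  · -- membership
    rw [Finset.mem_finsuppAntidiag']
    constructor
    · rw [cnt_sum, hn]
    · intro i hi
      rw [Finsupp.mem_support_iff, cnt_apply] at hi
      simp only [Finset.sum_const, smul_eq_mul, mul_one] at hi
      obtain ⟨v, hv⟩ := Finset.card_pos.mp (Nat.pos_of_ne_zero hi)
      rw [Finset.mem_filter] at hv
      rw [Finset.mem_range, ← hv.2]
      exact (c.1 v).isLt
  · -- left_inv
    rintro ⟨⟨d, hd⟩, ⟨κ, hp, hc⟩⟩
    refine Sigma.ext (Subtype.ext ?_) ((Subtype.heq_iff_coe_eq ?_).mpr rfl)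
    · exact hc
    · intro κ'
      exact and_congr_right fun _ => ⟨fun h => h.trans hc, fun h => h.trans hc.symm⟩
  · -- right_inv
    rintro ⟨c, hc⟩
    apply Subtype.ext
    funext v
    apply Fin.ext
    rfl

private lemma card_ne_fin (m : ℕ) (a : Fin m) : Nat.card {x : Fin m // x ≠ a} = m - 1 := by
  classical
  rw [Nat.card_eq_fintype_card]
  have : Fintype.card {x : Fin m // ¬ x = a} = Fintype.card (Fin m) - Fintype.card {x : Fin m // x = a} :=
    Fintype.card_subtype_compl _
  simpa [Fintype.card_subtype_eq] using this

private lemma card_path (r m : ℕ) :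
    Nat.card (PC (SimpleGraph.pathGraph (r + 1)) m) = m * (m - 1) ^ r := by
  classical
  induction r with
  | zero =>
    have : PC (SimpleGraph.pathGraph 1) m ≃ Fin m := by
      refine ⟨fun c => c.1 0, fun x => ⟨fun _ => x, ?_⟩, fun c => ?_, fun x => rfl⟩
      · intro u v huv
        rw [SimpleGraph.pathGraph_adj] at huv
        omega
      · apply Subtype.ext; funext i
        have : i = 0 := Subsingleton.elim _ _
        rw [this]
    rw [Nat.card_congr this]
    simp
  | succ r ih =>
    -- restriction map
    set π : PC (SimpleGraph.pathGraph (r + 2)) m → PC (SimpleGraph.pathGraph (r + 1)) m :=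
      fun c => ⟨fun i => c.1 i.castSucc, by
        intro u v huv
        apply c.2
        rw [SimpleGraph.pathGraph_adj] at huv ⊢
        simpa using huv⟩ with hπ
    have hfib : ∀ c' : PC (SimpleGraph.pathGraph (r + 1)) m,
        Nat.card {c // π c = c'} = m - 1 := by
      intro c'
      rw [← card_ne_fin m (c'.1 (Fin.last r))]
      apply Nat.card_congr
      refine ⟨fun c => ⟨c.1.1 (Fin.last (r + 1)), ?_⟩, fun x => ⟨⟨Fin.snoc c'.1 x.1, ?_⟩, ?_⟩, ?_, ?_⟩
      · -- last value differs from c' (last r)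
        intro hx
        have hadj : (SimpleGraph.pathGraph (r + 2)).Adj ((Fin.last r).castSucc) (Fin.last (r + 1)) := by
          rw [SimpleGraph.pathGraph_adj]; left; simp
        have h1 : c.1.1 ((Fin.last r).castSucc) = c'.1 (Fin.last r) :=
          congrFun (congrArg Subtype.val c.2) (Fin.last r)
        exact c.1.2 _ _ hadj (h1.trans hx.symm)
      · -- snoc is proper
        intro u v huv
        rw [SimpleGraph.pathGraph_adj] at huv
        rcases huv with h | h
        · by_cases hv : (v : ℕ) = r + 1
          · have hu : u = (Fin.last r).castSucc := by
              apply Fin.ext; simp; omega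
            have hv' : v = Fin.last (r + 1) := by apply Fin.ext; simpa using hv
            rw [hu, hv', Fin.snoc_castSucc, Fin.snoc_last]
            exact fun hh => x.2 hh.symm
          · have hult : (u : ℕ) < r + 1 := by have := v.isLt; omega
            have hvlt : (v : ℕ) < r + 1 := by omega
            have hu : u = (⟨u, hult⟩ : Fin (r + 1)).castSucc := by apply Fin.ext; simp
            have hv' : v = (⟨v, hvlt⟩ : Fin (r + 1)).castSucc := by apply Fin.ext; simp
            rw [hu, hv', Fin.snoc_castSucc, Fin.snoc_castSucc]
            apply c'.2
            rw [SimpleGraph.pathGraph_adj]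
            left; simpa using h
        · by_cases hu : (u : ℕ) = r + 1
          · have hv' : v = (Fin.last r).castSucc := by
              apply Fin.ext; simp; omega
            have hu' : u = Fin.last (r + 1) := by apply Fin.ext; simpa using hu
            rw [hu', hv', Fin.snoc_castSucc, Fin.snoc_last]
            exact x.2
          · have hvlt : (v : ℕ) < r + 1 := by have := u.isLt; omega
            have hult : (u : ℕ) < r + 1 := by omega
            have hu' : u = (⟨u, hult⟩ : Fin (r + 1)).castSucc := by apply Fin.ext; simp
            have hv' : v = (⟨v, hvlt⟩ : Fin (r + 1)).castSucc := by apply Fin.ext; simp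
            rw [hu', hv', Fin.snoc_castSucc, Fin.snoc_castSucc]
            apply c'.2
            rw [SimpleGraph.pathGraph_adj]
            right; simpa using h
      · -- π of snoc = c'
        apply Subtype.ext; funext i
        simp [hπ, Fin.snoc_castSucc]
      · -- left inverse
        rintro ⟨⟨c, hc⟩, hrest⟩
        apply Subtype.ext; apply Subtype.ext
        funext j
        dsimp only
        refine Fin.lastCases ?_ (fun i => ?_) j
        · rw [Fin.snoc_last]
        · rw [Fin.snoc_castSucc]
          exact (congrFun (congrArg Subtype.val hrest) i).symm
      · -- right inverse
        rintro ⟨x, hx⟩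
        apply Subtype.ext
        simp [Fin.snoc_last]
    calc Nat.card (PC (SimpleGraph.pathGraph (r + 2)) m)
        = Nat.card (Σ c' : PC (SimpleGraph.pathGraph (r + 1)) m, {c // π c = c'}) :=
          (Nat.card_congr (Equiv.sigmaFiberEquiv π)).symm
      _ = Nat.card (PC (SimpleGraph.pathGraph (r + 1)) m) * (m - 1) :=
          natCard_sigma_const _ _ hfib
      _ = m * (m - 1) ^ (r + 1) := by rw [ih]; ring

private lemma multiset_card_le_sum (μ : Multiset ℕ) (h : ∀ x ∈ μ, 0 < x) :
    Multiset.card μ ≤ μ.sum := by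
  induction μ using Multiset.induction_on with
  | empty => simp
  | cons a s ih =>
    rw [Multiset.card_cons, Multiset.sum_cons]
    have ha := h a (Multiset.mem_cons_self a s)
    have := ih (fun x hx => h x (Multiset.mem_cons_of_mem hx))
    omega

private lemma homog_XP (μ : Multiset ℕ) : Homog μ.sum (XP μ) := by
  induction μ using Multiset.induction_on with
  | empty => simpa [XP] using homog_one
  | cons a s ih =>
    have : XP (a ::ₘ s) = csf (SimpleGraph.pathGraph a) * XP s := by
      rw [XP, Multiset.map_cons, Multiset.prod_cons]; rfl
    rw [this, Multiset.sum_cons]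
    have h1 : Homog a (csf (SimpleGraph.pathGraph a)) := by
      simpa using homog_csf (SimpleGraph.pathGraph a)
    exact homog_mul h1 ih

private lemma ev_XP (m : ℕ) (hm : 1 ≤ m) (μ : Multiset ℕ) (hpos : ∀ x ∈ μ, 0 < x) :
    ev m μ.sum (XP μ) =
      ((m : ℚ) ^ (Multiset.card μ)) * ((m : ℚ) - 1) ^ (μ.sum - Multiset.card μ) := by
  induction μ using Multiset.induction_on with
  | empty => simpa [XP] using ev_one m
  | cons a s ih =>
    have hXP : XP (a ::ₘ s) = csf (SimpleGraph.pathGraph a) * XP s := by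
      rw [XP, Multiset.map_cons, Multiset.prod_cons]; rfl
    have ha : 0 < a := hpos a (Multiset.mem_cons_self a s)
    have hs : ∀ x ∈ s, 0 < x := fun x hx => hpos x (Multiset.mem_cons_of_mem hx)
    rw [Multiset.sum_cons, hXP, ev_mul m (by simpa using homog_csf (SimpleGraph.pathGraph a))
      (homog_XP s), ih hs]
    -- ev of path csf
    obtain ⟨r, rfl⟩ : ∃ r, a = r + 1 := ⟨a - 1, by omega⟩
    rw [ev_csf (SimpleGraph.pathGraph (r + 1)) m (r + 1) (by simp), card_path r m]
    have hcast : ((m * (m - 1) ^ r : ℕ) : ℚ) = (m : ℚ) * ((m : ℚ) - 1) ^ r := by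
      push_cast [Nat.cast_sub hm]
      ring
    rw [hcast]
    have hcard : Multiset.card s ≤ s.sum := multiset_card_le_sum s hs
    rw [Multiset.card_cons]
    have he : (r + 1 + s.sum) - (Multiset.card s + 1) = r + (s.sum - Multiset.card s) := by omega
    rw [he, pow_add, pow_succ, pow_add]
    ring

private lemma pow_key (q x : ℚ) (hx : x ≠ 0) (c n : ℕ) (hc : c ≤ n) :
    (q / x) ^ c * x ^ n = q ^ c * x ^ (n - c) := by
  have hxn : x ^ n = x ^ c * x ^ (n - c) := by rw [← pow_add]; congr 1; omega
  rw [div_pow, hxn]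
  field_simp

private lemma chi_formula {V : Type} [Fintype V] (G : SimpleGraph V) (n : ℕ)
    (hn : Fintype.card V = n) (a : n.Partition → ℚ)
    (ha : csf G = ∑ l : n.Partition, a l • XP l.parts) (m : ℕ) (hm : 2 ≤ m) :
    (basisPoly n a).eval ((m : ℚ) / ((m : ℚ) - 1)) * ((m : ℚ) - 1) ^ n
      = (Nat.card (PC G m) : ℚ) := by
  have hm2 : (2 : ℚ) ≤ (m : ℚ) := by exact_mod_cast hm
  have hm1 : ((m : ℚ) - 1) ≠ 0 := by intro h; nlinarith
  rw [← ev_csf G m n hn, ha, ev_sum]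
  rw [basisPoly, Polynomial.eval_finset_sum, Finset.sum_mul]
  apply Finset.sum_congr rfl
  intro l _
  rw [ev_smul, Polynomial.eval_mul, Polynomial.eval_C, Polynomial.eval_pow, Polynomial.eval_X]
  have hsum : l.parts.sum = n := l.parts_sum
  have hpos : ∀ x ∈ l.parts, 0 < x := fun x hx => l.parts_pos hx
  have hev := ev_XP m (by omega) l.parts hpos
  rw [hsum] at hev
  rw [hev]
  have hcard : Multiset.card l.parts ≤ n := by
    have := multiset_card_le_sum l.parts hpos
    omega
  rw [mul_assoc, pow_key _ _ hm1 _ _ hcard]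

private lemma exists_perm_comp {k m : ℕ} (y z : Fin k → Fin m)
    (hy : Function.Injective y) (hz : Function.Injective z) :
    ∃ σ : Equiv.Perm (Fin m), ∀ i, σ (y i) = z i := by
  classical
  have hcard : Fintype.card {x : Fin m // x ∉ Set.range y} =
      Fintype.card {x : Fin m // x ∉ Set.range z} := by
    have h1 : Fintype.card {x : Fin m // ¬ x ∈ Set.range y} =
        Fintype.card (Fin m) - Fintype.card {x : Fin m // x ∈ Set.range y} :=
      Fintype.card_subtype_compl _
    have h2 : Fintype.card {x : Fin m // ¬ x ∈ Set.range z} =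
        Fintype.card (Fin m) - Fintype.card {x : Fin m // x ∈ Set.range z} :=
      Fintype.card_subtype_compl _
    have h3 : Fintype.card {x : Fin m // x ∈ Set.range y} = k :=
      (Fintype.card_congr (Equiv.ofInjective y hy).symm).trans (Fintype.card_fin k)
    have h4 : Fintype.card {x : Fin m // x ∈ Set.range z} = k :=
      (Fintype.card_congr (Equiv.ofInjective z hz).symm).trans (Fintype.card_fin k)
    rw [h1, h2, h3, h4]
  let e : {x : Fin m // x ∈ Set.range y} ≃ {x : Fin m // x ∈ Set.range z} :=
    (Equiv.ofInjective y hy).symm.trans (Equiv.ofInjective z hz)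
  let e' : {x : Fin m // ¬ x ∈ Set.range y} ≃ {x : Fin m // ¬ x ∈ Set.range z} :=
    Fintype.equivOfCardEq hcard
  refine ⟨Equiv.subtypeCongr e e', fun i => ?_⟩
  have hmem : y i ∈ Set.range y := ⟨i, rfl⟩
  have h5 : Equiv.subtypeCongr e e' (y i) = (e ⟨y i, hmem⟩ : Fin m) := by
    unfold Equiv.subtypeCongr
    simp [Equiv.sumCompl_symm_apply_of_pos hmem]
  rw [h5]
  have : (⟨y i, hmem⟩ : {x : Fin m // x ∈ Set.range y}) = Equiv.ofInjective y hy i := rfl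
  simp only [e, Equiv.trans_apply, this, Equiv.symm_apply_apply]
  rfl

private lemma fiber_card_const {V : Type} [Fintype V] (G : SimpleGraph V) {m k : ℕ}
    (g : Fin k → V) {y z : Fin k → Fin m}
    (hy : Function.Injective y) (hz : Function.Injective z) :
    Nat.card {c : PC G m // ∀ i, c.1 (g i) = y i} =
      Nat.card {c : PC G m // ∀ i, c.1 (g i) = z i} := by
  obtain ⟨σ, hσ⟩ := exists_perm_comp y z hy hz
  obtain ⟨τ, hτ⟩ := exists_perm_comp z y hz hy
  apply Nat.card_congr
  refine ⟨fun c => ⟨⟨σ ∘ c.1.1, fun u v huv h => c.1.2 u v huv (σ.injective h)⟩,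
      fun i => by simp only [Function.comp_apply, c.2 i, hσ]⟩,
    fun c => ⟨⟨σ.symm ∘ c.1.1, fun u v huv h => c.1.2 u v huv (σ.symm.injective h)⟩,
      fun i => by simp only [Function.comp_apply, c.2 i, ← hσ, Equiv.symm_apply_apply]⟩,
    fun c => by apply Subtype.ext; apply Subtype.ext; funext v; simp,
    fun c => by apply Subtype.ext; apply Subtype.ext; funext v; simp⟩

private lemma gluing_count {V₁ V₂ W : Type} [Fintype V₁] [Fintype V₂] [Fintype W]
    (G₁ : SimpleGraph V₁) (G₂ : SimpleGraph V₂) (H : SimpleGraph W) (k : ℕ)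
    (f₁ : G₁ ↪g H) (f₂ : G₂ ↪g H)
    (hcover : Set.range f₁ ∪ Set.range f₂ = Set.univ)
    (hedges : ∀ u v : W, H.Adj u v →
      (u ∈ Set.range f₁ ∧ v ∈ Set.range f₁) ∨ (u ∈ Set.range f₂ ∧ v ∈ Set.range f₂))
    (hclique : H.IsClique (Set.range f₁ ∩ Set.range f₂))
    (hk : (Set.range f₁ ∩ Set.range f₂).ncard = k) (m : ℕ) :
    Nat.card (PC H m) * Nat.card (PC (SimpleGraph.completeGraph (Fin k)) m) =
      Nat.card (PC G₁ m) * Nat.card (PC G₂ m) := by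
  classical
  set S : Set W := Set.range ⇑f₁ ∩ Set.range ⇑f₂ with hSdef
  have hScard : Nat.card S = k := by rw [Nat.card_coe_set_eq]; exact hk
  let eS : Fin k ≃ S := (Finite.equivFinOfCardEq hScard).symm
  obtain ⟨q₁, hq₁⟩ : ∃ q : {w // w ∈ Set.range ⇑f₁} → V₁, ∀ s, f₁ (q s) = s.1 :=
    ⟨fun s => s.2.choose, fun s => s.2.choose_spec⟩
  obtain ⟨q₂, hq₂⟩ : ∃ q : {w // w ∈ Set.range ⇑f₂} → V₂, ∀ s, f₂ (q s) = s.1 :=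
    ⟨fun s => s.2.choose, fun s => s.2.choose_spec⟩
  have hq₁' : ∀ (a : V₁) (h : (f₁ a : W) ∈ Set.range ⇑f₁), q₁ ⟨f₁ a, h⟩ = a :=
    fun a h => f₁.injective (hq₁ ⟨f₁ a, h⟩)
  have hq₂' : ∀ (a : V₂) (h : (f₂ a : W) ∈ Set.range ⇑f₂), q₂ ⟨f₂ a, h⟩ = a :=
    fun a h => f₂.injective (hq₂ ⟨f₂ a, h⟩)
  have hw₂ : ∀ w : W, w ∉ Set.range ⇑f₁ → w ∈ Set.range ⇑f₂ := by
    intro w h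
    have hmem : w ∈ Set.range ⇑f₁ ∪ Set.range ⇑f₂ := by rw [hcover]; trivial
    exact hmem.resolve_left h
  -- the three restriction maps to injections
  let Inj := {g : Fin k → Fin m // Function.Injective g}
  have memS₁ : ∀ i : Fin k, ((eS i : W)) ∈ Set.range ⇑f₁ := fun i => (eS i).2.1
  have memS₂ : ∀ i : Fin k, ((eS i : W)) ∈ Set.range ⇑f₂ := fun i => (eS i).2.2
  have eS_ne : ∀ {i j : Fin k}, i ≠ j → ((eS i : W)) ≠ ((eS j : W)) := by
    intro i j hij h
    exact hij (eS.injective (Subtype.ext h))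
  have adjS : ∀ {i j : Fin k}, i ≠ j → H.Adj (eS i) (eS j) :=
    fun {i j} hij => hclique (eS i).2 (eS j).2 (eS_ne hij)
  let g₁ : Fin k → V₁ := fun i => q₁ ⟨eS i, memS₁ i⟩
  let g₂ : Fin k → V₂ := fun i => q₂ ⟨eS i, memS₂ i⟩
  have hg₁ : ∀ i, f₁ (g₁ i) = (eS i : W) := fun i => hq₁ _
  have hg₂ : ∀ i, f₂ (g₂ i) = (eS i : W) := fun i => hq₂ _
  have adj₁ : ∀ {i j : Fin k}, i ≠ j → G₁.Adj (g₁ i) (g₁ j) := by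
    intro i j hij
    rw [← f₁.map_rel_iff, hg₁, hg₁]
    exact adjS hij
  have adj₂ : ∀ {i j : Fin k}, i ≠ j → G₂.Adj (g₂ i) (g₂ j) := by
    intro i j hij
    rw [← f₂.map_rel_iff, hg₂, hg₂]
    exact adjS hij
  let rest₁ : PC G₁ m → Inj := fun c => ⟨fun i => c.1 (g₁ i), by
    intro i j hij
    by_contra hne
    exact c.2 _ _ (adj₁ hne) hij⟩
  let rest₂ : PC G₂ m → Inj := fun c => ⟨fun i => c.1 (g₂ i), by
    intro i j hij
    by_contra hne
    exact c.2 _ _ (adj₂ hne) hij⟩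
  let restH : PC H m → Inj := fun c => ⟨fun i => c.1 (eS i), by
    intro i j hij
    by_contra hne
    exact c.2 _ _ (adjS hne) hij⟩
  -- complete graph colorings = injections
  have hK : Nat.card (PC (SimpleGraph.completeGraph (Fin k)) m) = Nat.card Inj := by
    apply Nat.card_congr
    refine ⟨fun c => ⟨c.1, fun i j h => ?_⟩, fun g => ⟨g.1, fun u v huv h => huv (g.2 h)⟩,
      fun c => rfl, fun g => rfl⟩
    by_contra hne
    exact c.2 i j hne h
  -- gluing equivalence
  have hagree : ∀ (p : PC G₁ m × PC G₂ m),
      (∀ i : Fin k, p.1.1 (g₁ i) = p.2.1 (g₂ i)) →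
      ∀ (w : W) (h1 : w ∈ Set.range ⇑f₁) (h2 : w ∈ Set.range ⇑f₂),
      p.1.1 (q₁ ⟨w, h1⟩) = p.2.1 (q₂ ⟨w, h2⟩) := by
    intro p hp w h1 h2
    have hwS : w ∈ S := ⟨h1, h2⟩
    set i := eS.symm ⟨w, hwS⟩ with hi
    have hcoe : ((eS i : W)) = w := congrArg Subtype.val (eS.apply_symm_apply ⟨w, hwS⟩)
    have e1 : (⟨w, h1⟩ : {x // x ∈ Set.range ⇑f₁}) = ⟨(eS i : W), memS₁ i⟩ := Subtype.ext hcoe.symm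
    have e2 : (⟨w, h2⟩ : {x // x ∈ Set.range ⇑f₂}) = ⟨(eS i : W), memS₂ i⟩ := Subtype.ext hcoe.symm
    rw [e1, e2]
    exact hp i
  let Compat := {p : PC G₁ m × PC G₂ m // ∀ i : Fin k, p.1.1 (g₁ i) = p.2.1 (g₂ i)}
  let glue : Compat → (W → Fin m) := fun p w =>
    if h : w ∈ Set.range ⇑f₁ then p.1.1.1 (q₁ ⟨w, h⟩) else p.1.2.1 (q₂ ⟨w, hw₂ w h⟩)
  have glue_spec₁ : ∀ (p : Compat) (w : W) (h1 : w ∈ Set.range ⇑f₁),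
      glue p w = p.1.1.1 (q₁ ⟨w, h1⟩) := fun p w h1 => dif_pos h1
  have glue_spec₂ : ∀ (p : Compat) (w : W) (h2 : w ∈ Set.range ⇑f₂),
      glue p w = p.1.2.1 (q₂ ⟨w, h2⟩) := by
    intro p w h2
    by_cases h1 : w ∈ Set.range ⇑f₁
    · rw [glue_spec₁ p w h1]
      exact hagree p.1 p.2 w h1 h2
    · show (if h : w ∈ Set.range ⇑f₁ then p.1.1.1 (q₁ ⟨w, h⟩) else p.1.2.1 (q₂ ⟨w, hw₂ w h⟩)) = _
      rw [dif_neg h1]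
  have glue_proper : ∀ p : Compat, ∀ u v, H.Adj u v → glue p u ≠ glue p v := by
    intro p u v huv
    rcases hedges u v huv with ⟨hu, hv⟩ | ⟨hu, hv⟩
    · rw [glue_spec₁ p u hu, glue_spec₁ p v hv]
      apply p.1.1.2
      rw [← f₁.map_rel_iff, hq₁, hq₁]
      exact huv
    · rw [glue_spec₂ p u hu, glue_spec₂ p v hv]
      apply p.1.2.2
      rw [← f₂.map_rel_iff, hq₂, hq₂]
      exact huv
  let Φ : PC H m ≃ Compat := {
    toFun := fun c => ⟨(⟨fun a => c.1 (f₁ a), fun u v huv => c.2 _ _ (f₁.map_rel_iff.mpr huv)⟩,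
                        ⟨fun a => c.1 (f₂ a), fun u v huv => c.2 _ _ (f₂.map_rel_iff.mpr huv)⟩),
      fun i => by
        show c.1 (f₁ (g₁ i)) = c.1 (f₂ (g₂ i))
        rw [hg₁ i, hg₂ i]⟩
    invFun := fun p => ⟨glue p, glue_proper p⟩
    left_inv := by
      intro c
      apply Subtype.ext
      funext w
      by_cases h : w ∈ Set.range ⇑f₁
      · refine (glue_spec₁ _ w h).trans ?_
        show c.1 (f₁ (q₁ ⟨w, h⟩)) = c.1 w
        rw [hq₁]
      · refine (glue_spec₂ _ w (hw₂ w h)).trans ?_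
        show c.1 (f₂ (q₂ ⟨w, _⟩)) = c.1 w
        rw [hq₂]
    right_inv := by
      intro p
      apply Subtype.ext
      apply Prod.ext
      · apply Subtype.ext
        funext a
        refine (glue_spec₁ p (f₁ a) ⟨a, rfl⟩).trans ?_
        rw [hq₁' a ⟨a, rfl⟩]
      · apply Subtype.ext
        funext a
        refine (glue_spec₂ p (f₂ a) ⟨a, rfl⟩).trans ?_
        rw [hq₂' a ⟨a, rfl⟩] }
  -- counting
  rcases isEmpty_or_nonempty Inj with hempty | hne
  · have h1 : Nat.card (PC H m) = 0 := by
      rw [Nat.card_eq_zero]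
      exact Or.inl ⟨fun c => hempty.false (restH c)⟩
    have h2 : Nat.card (PC G₁ m) = 0 := by
      rw [Nat.card_eq_zero]
      exact Or.inl ⟨fun c => hempty.false (rest₁ c)⟩
    rw [h1, h2]
    ring
  · obtain ⟨y₀⟩ := hne
    have efib₁ : ∀ z : Inj, Nat.card {c : PC G₁ m // rest₁ c = z} =
        Nat.card {c : PC G₁ m // ∀ i, c.1 (g₁ i) = z.1 i} := by
      intro z
      apply Nat.card_congr
      apply Equiv.subtypeEquivRight
      intro c
      exact Subtype.ext_iff.trans funext_iff
    have efib₂ : ∀ z : Inj, Nat.card {c : PC G₂ m // rest₂ c = z} =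
        Nat.card {c : PC G₂ m // ∀ i, c.1 (g₂ i) = z.1 i} := by
      intro z
      apply Nat.card_congr
      apply Equiv.subtypeEquivRight
      intro c
      exact Subtype.ext_iff.trans funext_iff
    have fib₁ : ∀ y : Inj, Nat.card {c : PC G₁ m // rest₁ c = y} =
        Nat.card {c : PC G₁ m // rest₁ c = y₀} := by
      intro y
      rw [efib₁ y, efib₁ y₀]
      exact fiber_card_const G₁ g₁ y.2 y₀.2
    have fib₂ : ∀ y : Inj, Nat.card {c : PC G₂ m // rest₂ c = y} =
        Nat.card {c : PC G₂ m // rest₂ c = y₀} := by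
      intro y
      rw [efib₂ y, efib₂ y₀]
      exact fiber_card_const G₂ g₂ y.2 y₀.2
    set E₁ := Nat.card {c : PC G₁ m // rest₁ c = y₀} with hE₁
    set E₂ := Nat.card {c : PC G₂ m // rest₂ c = y₀} with hE₂
    have hcard₁ : Nat.card (PC G₁ m) = Nat.card Inj * E₁ := by
      rw [← Nat.card_congr (Equiv.sigmaFiberEquiv rest₁)]
      exact natCard_sigma_const _ E₁ fib₁
    have hcard₂ : Nat.card (PC G₂ m) = Nat.card Inj * E₂ := by
      rw [← Nat.card_congr (Equiv.sigmaFiberEquiv rest₂)]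
      exact natCard_sigma_const _ E₂ fib₂
    let πC : Compat → Inj := fun p => rest₁ p.1.1
    have fibC : ∀ y : Inj, Nat.card {p : Compat // πC p = y} = E₁ * E₂ := by
      intro y
      rw [← fib₁ y, ← fib₂ y, ← Nat.card_prod]
      apply Nat.card_congr
      refine ⟨fun p => (⟨p.1.1.1, p.2⟩, ⟨p.1.1.2, ?_⟩), fun q => ⟨⟨(q.1.1, q.2.1), ?_⟩, ?_⟩, ?_, ?_⟩
      · apply Subtype.ext
        funext i
        show p.1.1.2.1 (g₂ i) = y.1 i
        rw [← p.1.2 i]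
        exact congrFun (congrArg Subtype.val p.2) i
      · intro i
        have h1 := congrFun (congrArg Subtype.val q.1.2) i
        have h2 := congrFun (congrArg Subtype.val q.2.2) i
        exact h1.trans h2.symm
      · exact q.1.2
      · intro p
        apply Subtype.ext
        apply Subtype.ext
        exact Prod.mk.eta
      · intro q
        exact Prod.ext (Subtype.ext rfl) (Subtype.ext rfl)
    have hcardC : Nat.card Compat = Nat.card Inj * (E₁ * E₂) := by
      rw [← Nat.card_congr (Equiv.sigmaFiberEquiv πC)]
      exact natCard_sigma_const _ (E₁ * E₂) fibC
    have hH : Nat.card (PC H m) = Nat.card Compat := Nat.card_congr Φ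
    rw [hH, hK, hcardC, hcard₁, hcard₂]
    ring

/-- clique-gluing formula for the tree polynomial: if `H` is obtained by
gluing `G₁` and `G₂` along a `k`-clique (i.e. there are induced-subgraph embeddings of `G₁`
and `G₂` into `H` covering all of `H`, all edges of `H` lie inside one of the two copies,
and the overlap of the two copies is a clique on `k` vertices), then
`τ_H · τ_{K_k} = τ_{G₁} · τ_{G₂}`, where each tree polynomial is read off from the
path-basis expansion of the corresponding chromatic symmetric function. -/
theorem stmt_13 {V₁ V₂ W : Type} [Fintype V₁] [Fintype V₂] [Fintype W]
    (G₁ : SimpleGraph V₁) (G₂ : SimpleGraph V₂) (H : SimpleGraph W) (k : ℕ)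
    (f₁ : G₁ ↪g H) (f₂ : G₂ ↪g H)
    (hcover : Set.range f₁ ∪ Set.range f₂ = Set.univ)
    (hedges : ∀ u v : W, H.Adj u v →
      (u ∈ Set.range f₁ ∧ v ∈ Set.range f₁) ∨ (u ∈ Set.range f₂ ∧ v ∈ Set.range f₂))
    (hclique : H.IsClique (Set.range f₁ ∩ Set.range f₂))
    (hk : (Set.range f₁ ∩ Set.range f₂).ncard = k)
    (n₁ n₂ nH : ℕ) (hn₁ : Fintype.card V₁ = n₁) (hn₂ : Fintype.card V₂ = n₂)
    (hnH : Fintype.card W = nH)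
    (a₁ : n₁.Partition → ℚ) (ha₁ : csf G₁ = ∑ l : n₁.Partition, a₁ l • XP l.parts)
    (a₂ : n₂.Partition → ℚ) (ha₂ : csf G₂ = ∑ l : n₂.Partition, a₂ l • XP l.parts)
    (aH : nH.Partition → ℚ) (haH : csf H = ∑ l : nH.Partition, aH l • XP l.parts)
    (aK : k.Partition → ℚ)
    (haK : csf (SimpleGraph.completeGraph (Fin k)) = ∑ l : k.Partition, aK l • XP l.parts) :
    basisPoly nH aH * basisPoly k aK = basisPoly n₁ a₁ * basisPoly n₂ a₂ := by
    classical
  -- cardinality identity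
  have hcards : nH + k = n₁ + n₂ := by
    have h1 : (Set.range ⇑f₁ ∪ Set.range ⇑f₂).ncard + (Set.range ⇑f₁ ∩ Set.range ⇑f₂).ncard =
        (Set.range ⇑f₁).ncard + (Set.range ⇑f₂).ncard :=
      Set.ncard_union_add_ncard_inter _ _
    have h2 : (Set.range ⇑f₁ ∪ Set.range ⇑f₂).ncard = nH := by
      rw [hcover, Set.ncard_univ, Nat.card_eq_fintype_card, hnH]
    have h3 : (Set.range ⇑f₁).ncard = n₁ := by
      rw [← Nat.card_coe_set_eq, Nat.card_range_of_injective f₁.injective,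
        Nat.card_eq_fintype_card, hn₁]
    have h4 : (Set.range ⇑f₂).ncard = n₂ := by
      rw [← Nat.card_coe_set_eq, Nat.card_range_of_injective f₂.injective,
        Nat.card_eq_fintype_card, hn₂]
    rw [h2, h3, h4, hk] at h1
    exact h1
  set P : Polynomial ℚ :=
    basisPoly nH aH * basisPoly k aK - basisPoly n₁ a₁ * basisPoly n₂ a₂ with hP
  have key : ∀ j : ℕ, P.IsRoot (((j : ℚ) + 2) / ((j : ℚ) + 1)) := by
    intro j
    set m : ℕ := j + 2 with hm
    have hm2 : 2 ≤ m := by omega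
    have hy : ((m : ℚ)) / ((m : ℚ) - 1) = ((j : ℚ) + 2) / ((j : ℚ) + 1) := by
      push_cast [hm]
      ring_nf
    have hm1 : ((m : ℚ) - 1) ≠ 0 := by
      push_cast [hm]; intro h; nlinarith [Nat.cast_nonneg (α := ℚ) j]
    set y : ℚ := (m : ℚ) / ((m : ℚ) - 1) with hydef
    have eH := chi_formula H nH hnH aH haH m hm2
    have eK := chi_formula (SimpleGraph.completeGraph (Fin k)) k (by simp) aK haK m hm2
    have e1 := chi_formula G₁ n₁ hn₁ a₁ ha₁ m hm2
    have e2 := chi_formula G₂ n₂ hn₂ a₂ ha₂ m hm2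
    have hcount := gluing_count G₁ G₂ H k f₁ f₂ hcover hedges hclique hk m
    have hcountQ : (Nat.card (PC H m) : ℚ) * (Nat.card (PC (SimpleGraph.completeGraph (Fin k)) m) : ℚ) =
        (Nat.card (PC G₁ m) : ℚ) * (Nat.card (PC G₂ m) : ℚ) := by
      exact_mod_cast congrArg (Nat.cast (R := ℚ)) hcount
    have hL : (basisPoly nH aH * basisPoly k aK).eval y * ((m : ℚ) - 1) ^ (nH + k) =
        (Nat.card (PC H m) : ℚ) * (Nat.card (PC (SimpleGraph.completeGraph (Fin k)) m) : ℚ) := by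
      rw [Polynomial.eval_mul, pow_add, ← eH, ← eK]
      ring
    have hR : (basisPoly n₁ a₁ * basisPoly n₂ a₂).eval y * ((m : ℚ) - 1) ^ (n₁ + n₂) =
        (Nat.card (PC G₁ m) : ℚ) * (Nat.card (PC G₂ m) : ℚ) := by
      rw [Polynomial.eval_mul, pow_add, ← e1, ← e2]
      ring
    have hpow : ((m : ℚ) - 1) ^ (nH + k) ≠ 0 := pow_ne_zero _ hm1
    have hfin : (basisPoly nH aH * basisPoly k aK).eval y =
        (basisPoly n₁ a₁ * basisPoly n₂ a₂).eval y := by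
      have := hL.trans (hcountQ.trans hR.symm)
      rw [← hcards] at this
      exact mul_right_cancel₀ hpow this
    rw [Polynomial.IsRoot, hP, ← hy]
    rw [Polynomial.eval_sub, hfin]
    ring
  have hinj : Function.Injective (fun j : ℕ => ((j : ℚ) + 2) / ((j : ℚ) + 1)) := by
    intro a b h
    simp only at h
    have ha1 : ((a : ℚ) + 1) ≠ 0 := by positivity
    have hb1 : ((b : ℚ) + 1) ≠ 0 := by positivity
    rw [div_eq_div_iff ha1 hb1] at h
    have : (a : ℚ) = b := by linear_combination -h
    exact_mod_cast this
  have hinf : {x : ℚ | P.IsRoot x}.Infinite :=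
    Set.infinite_of_injective_forall_mem hinj key
  have hP0 : P = 0 := P.eq_zero_of_infinite_isRoot hinf
  have := sub_eq_zero.mp hP0
  exact this
end
end
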